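/- Fix a natural number r ≥ 2. Define E(r,n) = 1 + Σ_{i=0}^{r} C(n,i)·(2·F_i − [i=0])·(3^{r−i} − 1) and S(r,n) = 1 + 2·Σ_{i=0}^{r−1} Σ_{k=0}^{r−i−1} C(n,i)·C(n−i−1,k), where C denotes the binomial coefficient, F_i is the i-th ordered Bell number, and [i=0] is 1 if i = 0 and 0 otherwise. Then the sequence n ↦ E(r,n)/S(r,n) (as real numbers) converges, as n → ∞, to F_{r−1}/2^{r−2}. -/

import Mathlib

/-- The `i`-th ordered Bell (Fubini) number: the total number of surjective functions
from `Fin i` onto `Fin k`, summed over `0 ≤ k ≤ i`. -/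
noncomputable def orderedBell (i : ℕ) : ℕ :=
  ∑ k ∈ Finset.range (i + 1), Nat.card {f : Fin i → Fin k // Function.Surjective f}

/-- `E(r,n)`, the total number of faces of the Engström representation of the rank `r`
uniform matroid on `n` elements with indexing complex `S⁰`. -/
noncomputable def engstromFaces (r n : ℕ) : ℕ :=
  1 + ∑ i ∈ Finset.range (r + 1),
    Nat.choose n i * (2 * orderedBell i - (if i = 0 then 1 else 0)) * (3 ^ (r - i) - 1)

/-- `S(r,n)`, the total number of faces of the Folkman–Lawrence representation of the
rank `r` uniform oriented matroid on `n` elements. -/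
def flFaces (r n : ℕ) : ℕ :=
  1 + 2 * ∑ i ∈ Finset.range r, ∑ k ∈ Finset.range (r - i),
    Nat.choose n i * Nat.choose (n - i - 1) k

open Filter Finset

lemma cast_choose_real (n k : ℕ) :
    (n.choose k : ℝ) = (n.descFactorial k : ℝ) / (k.factorial : ℝ) := by
  rw [eq_div_iff (by exact_mod_cast k.factorial_ne_zero)]
  exact_mod_cast (Nat.descFactorial_eq_factorial_mul_choose n k ▸ (mul_comm _ _)).symm

lemma descFactorial_div_pow (k : ℕ) :
    Filter.Tendsto (fun n : ℕ => (n.descFactorial k : ℝ) / (n : ℝ) ^ k) atTop (nhds 1) := by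
  have h : (fun n : ℕ => ∏ j ∈ range k, (((n : ℝ) - j) / n))
      =ᶠ[atTop] (fun n : ℕ => (n.descFactorial k : ℝ) / (n : ℝ) ^ k) := by
    filter_upwards [eventually_ge_atTop k, eventually_ge_atTop 1] with n hn h1
    rw [Nat.descFactorial_eq_prod_range, prod_div_distrib]
    push_cast
    congr 1
    · exact Finset.prod_congr rfl fun j hj => by
        rw [Nat.cast_sub (le_trans (mem_range.mp hj).le hn)]
    · rw [prod_const, card_range]
  refine Tendsto.congr' h ?_
  have hone : (1:ℝ) = ∏ _j ∈ range k, (1:ℝ) := by simp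
  rw [hone]
  refine tendsto_finset_prod _ fun j _ => ?_
  have h2 : Tendsto (fun n : ℕ => 1 - (j : ℝ) / n) atTop (nhds (1 - 0)) :=
    tendsto_const_nhds.sub (tendsto_const_div_atTop_nhds_zero_nat (j : ℝ))
  simp only [sub_zero] at h2
  refine h2.congr' ?_
  filter_upwards [eventually_ge_atTop 1] with n hn
  have : (n : ℝ) ≠ 0 := by
    have : 0 < n := by omega
    positivity
  field_simp

lemma choose_div_pow (k : ℕ) :
    Tendsto (fun n : ℕ => (n.choose k : ℝ) / (n : ℝ) ^ k) atTop (nhds (1 / k.factorial)) := by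
  have h := (descFactorial_div_pow k).div_const (k.factorial : ℝ)
  refine h.congr fun n => ?_
  rw [cast_choose_real]
  ring

lemma choose_sub_div_pow (c k : ℕ) :
    Tendsto (fun n : ℕ => ((n - c).choose k : ℝ) / (n : ℝ) ^ k) atTop (nhds (1 / k.factorial)) := by
  have h1 : Tendsto (fun n : ℕ => ((n - c).choose k : ℝ) / ((n - c : ℕ) : ℝ) ^ k) atTop
      (nhds (1 / k.factorial)) := (choose_div_pow k).comp (tendsto_sub_atTop_nat c)
  have h2 : Tendsto (fun n : ℕ => (((n - c : ℕ) : ℝ) / n) ^ k) atTop (nhds 1) := by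
    have h3 : Tendsto (fun n : ℕ => 1 - (c : ℝ) / n) atTop (nhds (1 - 0)) :=
      tendsto_const_nhds.sub (tendsto_const_div_atTop_nhds_zero_nat (c : ℝ))
    simp only [sub_zero] at h3
    have h4 : Tendsto (fun n : ℕ => (((n - c : ℕ) : ℝ) / n)) atTop (nhds 1) := by
      refine h3.congr' ?_
      filter_upwards [eventually_ge_atTop (c + 1)] with n hn
      have : (n : ℝ) ≠ 0 := by
        have : 0 < n := by omega
        positivity
      rw [Nat.cast_sub (by omega)]
      field_simp
    simpa using h4.pow k
  have := h1.mul h2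
  rw [mul_one] at this
  refine this.congr' ?_
  filter_upwards [eventually_ge_atTop (c + 1)] with n hn
  have hn0 : (n : ℝ) ≠ 0 := by
    have : 0 < n := by omega
    positivity
  have hnc : ((n - c : ℕ) : ℝ) ≠ 0 := by
    have : 0 < n - c := by omega
    positivity
  rw [div_pow]
  field_simp

lemma prodlim (i c k d : ℕ) (h : i + k ≤ d) :
    Tendsto (fun n : ℕ => (n.choose i : ℝ) * ((n - c).choose k : ℝ) / (n : ℝ) ^ d) atTop
      (nhds (if i + k = d then 1 / (i.factorial * k.factorial) else 0)) := by
  set m := d - i - k with hm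
  have h3 : Tendsto (fun n : ℕ => ((1 : ℝ) / n) ^ m) atTop
      (nhds (if i + k = d then 1 else 0)) := by
    rcases Nat.eq_zero_or_pos m with hm0 | hm0
    · have : i + k = d := by omega
      simp [this, hm0]
    · have : ¬ (i + k = d) := by omega
      simp only [this, if_false]
      simpa [zero_pow (by omega : m ≠ 0)] using (tendsto_one_div_atTop_nhds_zero_nat (𝕜 := ℝ)).pow m
  have hmain := ((choose_div_pow i).mul (choose_sub_div_pow c k)).mul h3
  have heq : (fun n : ℕ => (n.choose i : ℝ) / n ^ i * (((n - c).choose k : ℝ) / n ^ k)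
        * ((1 : ℝ) / n) ^ m)
      =ᶠ[atTop] (fun n : ℕ => (n.choose i : ℝ) * ((n - c).choose k : ℝ) / (n : ℝ) ^ d) := by
    filter_upwards [eventually_ge_atTop 1] with n hn
    have hn0 : (n : ℝ) ≠ 0 := by
      have : 0 < n := by omega
      positivity
    have hd' : i + k + m = d := by omega
    rw [div_pow, one_pow, div_mul_div_comm, div_mul_div_comm, ← pow_add, ← pow_add, mul_one, hd']
  refine Tendsto.congr' heq ?_
  have hval : (1 / (i.factorial:ℝ) * (1 / (k.factorial:ℝ)) * if i + k = d then 1 else 0)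
      = (if i + k = d then 1 / ((i.factorial:ℝ) * k.factorial) else 0) := by
    split <;> ring
  rw [← hval]
  exact hmain

lemma ob0 : orderedBell 0 = 1 := by
  unfold orderedBell
  rw [Finset.sum_range_one]
  haveI : Unique {f : Fin 0 → Fin 0 // Function.Surjective f} :=
    ⟨⟨⟨fun x => x.elim0, fun y => y.elim0⟩⟩, fun a => Subtype.ext (funext fun x => x.elim0)⟩
  exact Nat.card_unique

lemma obpos (i : ℕ) : (if i = 0 then 1 else 0) ≤ 2 * orderedBell i := by
  split
  · next h => subst h; rw [ob0]; omega
  · omega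

/-- auxiliary: the summand of the Engström count, as a real number -/
noncomputable def Aterm (r i : ℕ) : ℝ :=
  (2 * (orderedBell i : ℝ) - if i = 0 then 1 else 0) * ((3:ℝ) ^ (r - i) - 1)

lemma one_div_pow_lim (d : ℕ) (hd : d ≠ 0) :
    Tendsto (fun n : ℕ => (1:ℝ) / (n : ℝ) ^ d) atTop (nhds 0) := by
  have := (tendsto_one_div_atTop_nhds_zero_nat (𝕜 := ℝ)).pow d
  rw [zero_pow hd] at this
  simpa [div_pow] using this

/-- For fixed `r ≥ 2`, the ratio `ρ(U_{r,n}) = E(r,n)/S(r,n)` tends to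
`F_{r−1}/2^{r−2}` as `n → ∞`. -/
theorem ratio_tendsto (r : ℕ) (hr : 2 ≤ r) :
    Filter.Tendsto (fun n : ℕ => (engstromFaces r n : ℝ) / (flFaces r n : ℝ))
      Filter.atTop (nhds ((orderedBell (r - 1) : ℝ) / 2 ^ (r - 2))) := by
  have hdne : r - 1 ≠ 0 := by omega
  have hfne : ((r-1).factorial : ℝ) ≠ 0 := by exact_mod_cast (r-1).factorial_ne_zero
  -- cast of engstromFaces
  have hEcast : ∀ n : ℕ, (engstromFaces r n : ℝ)
      = 1 + ∑ i ∈ Finset.range (r+1), (n.choose i : ℝ) * Aterm r i := by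
    intro n
    unfold engstromFaces Aterm
    push_cast
    congr 1
    refine Finset.sum_congr rfl fun i _ => ?_
    rw [Nat.cast_sub (obpos i), Nat.cast_sub (Nat.one_le_pow _ 3 (by norm_num))]
    push_cast
    ring
  -- cast of flFaces
  have hScast : ∀ n : ℕ, (flFaces r n : ℝ)
      = 1 + 2 * ∑ i ∈ Finset.range r, ∑ k ∈ Finset.range (r-i),
          (n.choose i : ℝ) * ((n - (i+1)).choose k : ℝ) := by
    intro n
    unfold flFaces
    push_cast [Nat.sub_sub]
    ring
  -- limit of E / n^(r-1)
  have hEterm : ∀ i ∈ Finset.range (r+1),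
      Tendsto (fun n : ℕ => (n.choose i : ℝ) * Aterm r i / (n:ℝ)^(r-1)) atTop
        (nhds ((if i + 0 = r - 1 then 1 / ((i.factorial:ℝ) * (Nat.factorial 0)) else 0)
          * Aterm r i)) := by
    intro i hi
    by_cases hir : i = r
    · have hA : Aterm r i = 0 := by simp [Aterm, hir, Nat.sub_self]
      rw [hA]
      simp only [mul_zero, zero_div]
      exact tendsto_const_nhds
    · have hik : i + 0 ≤ r - 1 := by
        have := Finset.mem_range.mp hi; omega
      have h := (prodlim i 0 0 (r-1) hik).mul_const (Aterm r i)
      simp only [Nat.choose_zero_right, Nat.cast_one, mul_one] at h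
      refine h.congr fun n => by ring
  have hEsum := tendsto_finset_sum (Finset.range (r+1)) hEterm
  have hLEsum : (∑ i ∈ Finset.range (r+1),
      (if i + 0 = r - 1 then 1 / ((i.factorial:ℝ) * (Nat.factorial 0)) else 0) * Aterm r i)
      = 4 * (orderedBell (r-1) : ℝ) / ((r-1).factorial : ℝ) := by
    rw [Finset.sum_eq_single_of_mem (r-1) (Finset.mem_range.mpr (by omega))]
    · have h3 : r - (r-1) = 1 := by omega
      simp only [Aterm, Nat.add_zero, if_neg hdne, h3, Nat.factorial_zero,
        Nat.cast_one, mul_one, pow_one, if_true, eq_self_iff_true, sub_zero]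
      norm_num
      ring
    · intro b hb hbd
      simp [Nat.add_zero, hbd]
  have hE : Tendsto (fun n : ℕ => (engstromFaces r n : ℝ) / (n:ℝ)^(r-1)) atTop
      (nhds (4 * (orderedBell (r-1) : ℝ) / ((r-1).factorial : ℝ))) := by
    have h1 := (one_div_pow_lim (r-1) hdne).add (hLEsum ▸ hEsum)
    rw [zero_add] at h1
    refine h1.congr fun n => ?_
    rw [hEcast n, add_div, Finset.sum_div]
  -- limit of S / n^(r-1)
  have hSterm : ∀ i ∈ Finset.range r,
      Tendsto (fun n : ℕ => ∑ k ∈ Finset.range (r-i),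
          (n.choose i : ℝ) * ((n - (i+1)).choose k : ℝ) / (n:ℝ)^(r-1)) atTop
        (nhds (∑ k ∈ Finset.range (r-i),
          (if i + k = r - 1 then 1 / ((i.factorial:ℝ) * (k.factorial:ℝ)) else 0))) := by
    intro i hi
    refine tendsto_finset_sum _ fun k hk => ?_
    have hik : i + k ≤ r - 1 := by
      have h1 := Finset.mem_range.mp hi
      have h2 := Finset.mem_range.mp hk
      omega
    exact prodlim i (i+1) k (r-1) hik
  have hSsum := tendsto_finset_sum (Finset.range r) hSterm
  have hLSsum : (∑ i ∈ Finset.range r, ∑ k ∈ Finset.range (r-i),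
      (if i + k = r - 1 then 1 / ((i.factorial:ℝ) * (k.factorial:ℝ)) else 0))
      = (2:ℝ)^(r-1) / ((r-1).factorial : ℝ) := by
    have hinner : ∀ i ∈ Finset.range r, (∑ k ∈ Finset.range (r-i),
        (if i + k = r - 1 then 1 / ((i.factorial:ℝ) * (k.factorial:ℝ)) else 0))
        = ((r-1).choose i : ℝ) / ((r-1).factorial : ℝ) := by
      intro i hi
      have hi' := Finset.mem_range.mp hi
      rw [Finset.sum_eq_single_of_mem (r-1-i) (Finset.mem_range.mpr (by omega))]
      · rw [if_pos (by omega), Nat.cast_choose ℝ (by omega : i ≤ r - 1)]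
        have h1 : r - 1 - i ≠ 0 ∨ True := Or.inr trivial
        have hfi : (i.factorial : ℝ) ≠ 0 := by exact_mod_cast i.factorial_ne_zero
        have hfk : ((r-1-i).factorial : ℝ) ≠ 0 := by exact_mod_cast (r-1-i).factorial_ne_zero
        field_simp
      · intro b hb hbd
        rw [if_neg (by omega)]
    rw [Finset.sum_congr rfl hinner, ← Finset.sum_div]
    congr 1
    have : ∑ i ∈ Finset.range r, ((r-1).choose i : ℝ)
        = ((∑ i ∈ Finset.range ((r-1)+1), (r-1).choose i : ℕ) : ℝ) := by
      rw [show (r-1)+1 = r by omega]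
      push_cast
      rfl
    rw [this, Nat.sum_range_choose]
    push_cast
    rfl
  have hS : Tendsto (fun n : ℕ => (flFaces r n : ℝ) / (n:ℝ)^(r-1)) atTop
      (nhds (2 * ((2:ℝ)^(r-1) / ((r-1).factorial : ℝ)))) := by
    have h2 := (hLSsum ▸ hSsum).const_mul (2:ℝ)
    have h1 := (one_div_pow_lim (r-1) hdne).add h2
    rw [zero_add] at h1
    refine h1.congr fun n => ?_
    rw [hScast n, add_div, mul_div_assoc]
    congr 2
    rw [Finset.sum_div]
    exact Finset.sum_congr rfl fun i _ => (Finset.sum_div _ _ _).symm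
  -- combine
  have hne : 2 * ((2:ℝ)^(r-1) / ((r-1).factorial : ℝ)) ≠ 0 := by positivity
  have hq := hE.div hS hne
  have hval : (4 * (orderedBell (r-1) : ℝ) / ((r-1).factorial : ℝ))
      / (2 * ((2:ℝ)^(r-1) / ((r-1).factorial : ℝ)))
      = (orderedBell (r-1) : ℝ) / 2 ^ (r-2) := by
    rw [show r - 1 = (r-2)+1 by omega] at hfne ⊢
    rw [pow_succ]
    have h2 : ((2:ℝ)^(r-2)) ≠ 0 := by positivity
    field_simp
    ring
  rw [hval] at hq
  refine hq.congr' ?_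
  filter_upwards [eventually_ge_atTop 1] with n hn
  have hn0 : ((n:ℝ))^(r-1) ≠ 0 := by
    have : 0 < n := by omega
    positivity
  have hS0 : (flFaces r n : ℝ) ≠ 0 := by
    have : 0 < flFaces r n := Nat.lt_of_lt_of_le Nat.zero_lt_one (Nat.le_add_right 1 _)
    exact_mod_cast this.ne'
  simp only [Pi.div_apply]
  field_simp
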